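/- Unitary equivalence of marginals for vanishing entropy production: let ρ and ρ' be density matrices on ℂ^{d_S}, let ν be a faithful density matrix on ℂ^{d_R}, and let U be a unitary matrix on ℂ^{d_S}⊗ℂ^{d_R} such that U(ρ ⊗ ν)U* = ρ' ⊗ ν. Then tr(ρ^m) = tr((ρ')^m) for every natural number m ≥ 1, and there exists a unitary matrix V on ℂ^{d_S} with ρ' = V ρ V*. -/

import Mathlib

open Matrix Kronecker ComplexOrder

/-- Logarithm of a matrix, defined via the spectral theorem for Hermitian matrices
(junk value `0` on non-Hermitian matrices).  Since `Real.log 0 = 0`, for a positive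
semidefinite matrix this is the logarithm taken on the support, with the convention
`log 0 = 0` on the kernel. -/
noncomputable def mlog {n : Type*} [Fintype n] [DecidableEq n] (A : Matrix n n ℂ) :
    Matrix n n ℂ :=
  if hA : A.IsHermitian then
    (hA.eigenvectorUnitary : Matrix n n ℂ) *
      Matrix.diagonal (fun i => (Real.log (hA.eigenvalues i) : ℂ)) *
      (star hA.eigenvectorUnitary : Matrix n n ℂ)
  else 0

/-- von Neumann entropy `S(ρ) = -tr(ρ log ρ)`. -/
noncomputable def vnEnt {n : Type*} [Fintype n] [DecidableEq n] (ρ : Matrix n n ℂ) : ℝ :=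
  -(Matrix.trace (ρ * mlog ρ)).re

/-- Relative entropy `S(ζ₁|ζ₂) = tr(ζ₁ (log ζ₁ - log ζ₂))`. -/
noncomputable def relEnt {n : Type*} [Fintype n] [DecidableEq n] (ζ₁ ζ₂ : Matrix n n ℂ) : ℝ :=
  (Matrix.trace (ζ₁ * (mlog ζ₁ - mlog ζ₂))).re

/-- A density matrix: positive semidefinite with unit trace. -/
def IsDensityMatrix {n : Type*} [Fintype n] [DecidableEq n] (ρ : Matrix n n ℂ) : Prop :=
  ρ.PosSemidef ∧ ρ.trace = 1

/-- Partial trace over the reservoir (second) factor: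
`(tr_R M)_{ij} = Σ_k M_{(i,k),(j,k)}`. -/
noncomputable def ptraceR {dS dR : ℕ} (M : Matrix (Fin dS × Fin dR) (Fin dS × Fin dR) ℂ) :
    Matrix (Fin dS) (Fin dS) ℂ :=
  Matrix.of fun i j => ∑ k, M (i, k) (j, k)

/-- Partial trace over the system (first) factor:
`(tr_S M)_{kl} = Σ_i M_{(i,k),(i,l)}`. -/
noncomputable def ptraceS {dS dR : ℕ} (M : Matrix (Fin dS × Fin dR) (Fin dS × Fin dR) ℂ) :
    Matrix (Fin dR) (Fin dR) ℂ :=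
  Matrix.of fun k l => ∑ i, M (i, k) (i, l)

/-- The Gibbs state `e^{-βH}/tr(e^{-βH})` at inverse temperature `β`. -/
noncomputable def gibbs {dR : ℕ} (β : ℝ) (H : Matrix (Fin dR) (Fin dR) ℂ) :
    Matrix (Fin dR) (Fin dR) ℂ :=
  (Matrix.trace (NormedSpace.exp ((-β : ℂ) • H)))⁻¹ • NormedSpace.exp ((-β : ℂ) • H)

/-- The trace norm `‖X‖₁ = tr((X*X)^{1/2})`. -/
noncomputable def traceNorm {n : Type*} [Fintype n] [DecidableEq n] (X : Matrix n n ℂ) : ℝ :=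
  (Matrix.trace ((Matrix.posSemidef_conjTranspose_mul_self X).1.eigenvectorUnitary.1 *
    Matrix.diagonal ((fun x : ℝ => (x : ℂ)) ∘ (√·) ∘ (Matrix.posSemidef_conjTranspose_mul_self X).1.eigenvalues) *
    (star (Matrix.posSemidef_conjTranspose_mul_self X).1.eigenvectorUnitary : Matrix n n ℂ))).re

open Finset in

lemma exists_perm_of_psum_eq {n : ℕ} (f g : Fin n → ℝ)
    (h : ∀ m : ℕ, 1 ≤ m → ∑ i, f i ^ m = ∑ i, g i ^ m) :
    ∃ σ : Equiv.Perm (Fin n), g = f ∘ σ := by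
  classical
  have hpsum : ∀ (u : Fin n → ℝ) (k : ℕ),
      MvPolynomial.aeval u (MvPolynomial.psum (Fin n) ℝ k) = ∑ i, u i ^ k := by
    intro u k
    simp [MvPolynomial.psum]
  have hesymm : ∀ k, MvPolynomial.aeval f (MvPolynomial.esymm (Fin n) ℝ k)
      = MvPolynomial.aeval g (MvPolynomial.esymm (Fin n) ℝ k) := by
    intro k
    induction k using Nat.strong_induction_on with
    | _ k ih =>
      rcases Nat.eq_zero_or_pos k with hk | hk
      · subst hk; simp [MvPolynomial.esymm]
      have hf := congrArg (MvPolynomial.aeval f) (MvPolynomial.mul_esymm_eq_sum (Fin n) ℝ k)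
      have hg := congrArg (MvPolynomial.aeval g) (MvPolynomial.mul_esymm_eq_sum (Fin n) ℝ k)
      simp only [_root_.map_mul, map_sum, map_pow, map_natCast, map_neg, _root_.map_one] at hf hg
      have hsum : (∑ a ∈ Finset.HasAntidiagonal.antidiagonal k with a.1 < k,
            (-1 : ℝ) ^ a.1 * MvPolynomial.aeval f (MvPolynomial.esymm (Fin n) ℝ a.1)
              * MvPolynomial.aeval f (MvPolynomial.psum (Fin n) ℝ a.2))
          = ∑ a ∈ Finset.HasAntidiagonal.antidiagonal k with a.1 < k,
            (-1 : ℝ) ^ a.1 * MvPolynomial.aeval g (MvPolynomial.esymm (Fin n) ℝ a.1)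
              * MvPolynomial.aeval g (MvPolynomial.psum (Fin n) ℝ a.2) := by
        refine Finset.sum_congr rfl ?_
        intro a ha
        simp only [Finset.mem_filter, Finset.HasAntidiagonal.mem_antidiagonal] at ha
        have h2 : 1 ≤ a.2 := by omega
        rw [ih a.1 ha.2, hpsum f a.2, hpsum g a.2, h a.2 h2]
      have hkk : ((k:ℝ)) * MvPolynomial.aeval f (MvPolynomial.esymm (Fin n) ℝ k)
          = ((k:ℝ)) * MvPolynomial.aeval g (MvPolynomial.esymm (Fin n) ℝ k) := by
        rw [hf, hg, hsum]
      exact mul_left_cancel₀ (by exact_mod_cast hk.ne') hkk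
  have hms : Multiset.map f Finset.univ.val = Multiset.map g Finset.univ.val := by
    have hes : ∀ k, (Multiset.map f Finset.univ.val).esymm k
        = (Multiset.map g Finset.univ.val).esymm k := by
      intro k
      exact (MvPolynomial.aeval_esymm_eq_multiset_esymm (σ := Fin n) (R := ℝ) k f).symm.trans
        ((hesymm k).trans (MvPolynomial.aeval_esymm_eq_multiset_esymm (σ := Fin n) (R := ℝ) k g))
    have hcard : Multiset.card (Multiset.map f Finset.univ.val)
        = Multiset.card (Multiset.map g Finset.univ.val) := by simp
    have hprod : ((Multiset.map f Finset.univ.val).map fun t => Polynomial.X - Polynomial.C t).prod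
        = ((Multiset.map g Finset.univ.val).map fun t => Polynomial.X - Polynomial.C t).prod := by
      rw [Multiset.prod_X_sub_X_eq_sum_esymm, Multiset.prod_X_sub_X_eq_sum_esymm, hcard]
      exact Finset.sum_congr rfl fun j _ => by rw [hes j]
    have := congrArg Polynomial.roots hprod
    rwa [Polynomial.roots_multiset_prod_X_sub_C, Polynomial.roots_multiset_prod_X_sub_C] at this
  rw [Fin.univ_val_map, Fin.univ_val_map] at hms
  have hperm : (List.ofFn f).Perm (List.ofFn g) := Multiset.coe_eq_coe.mp hms
  have h1 : Monotone (f ∘ Tuple.sort f) := Tuple.monotone_sort f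
  have h2 : Monotone (g ∘ Tuple.sort g) := Tuple.monotone_sort g
  have hp : (List.ofFn (f ∘ Tuple.sort f)).Perm (List.ofFn (g ∘ Tuple.sort g)) :=
    ((Tuple.sort f).ofFn_comp_perm f).trans (hperm.trans ((Tuple.sort g).ofFn_comp_perm g).symm)
  have heq : f ∘ Tuple.sort f = g ∘ Tuple.sort g :=
    List.ofFn_injective (List.Perm.eq_of_sortedLE h1.sortedLE_ofFn h2.sortedLE_ofFn hp)
  refine ⟨(Tuple.sort g)⁻¹.trans (Tuple.sort f), ?_⟩
  funext i
  have := congrFun heq ((Tuple.sort g)⁻¹ i)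
  simpa using this.symm


lemma trace_pow_eq_sum_eig {n : Type*} [Fintype n] [DecidableEq n] {A : Matrix n n ℂ}
    (hA : A.IsHermitian) (m : ℕ) :
    Matrix.trace (A ^ m) = ((∑ i, hA.eigenvalues i ^ m : ℝ) : ℂ) := by
  set U : Matrix n n ℂ := (hA.eigenvectorUnitary : Matrix n n ℂ) with hUdef
  have h1 : star U * U = 1 := Matrix.mem_unitaryGroup_iff'.mp hA.eigenvectorUnitary.2
  have h2 : U * star U = 1 := Matrix.mem_unitaryGroup_iff.mp hA.eigenvectorUnitary.2
  set D : Matrix n n ℂ := Matrix.diagonal (RCLike.ofReal ∘ hA.eigenvalues) with hDdef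
  have key : A ^ m = U * D ^ m * star U := by
    induction m with
    | zero => simp [h2]
    | succ k ih =>
      rw [pow_succ, ih, hA.spectral_theorem, Unitary.conjStarAlgAut_apply, pow_succ]
      simp only [Matrix.mul_assoc]
      rw [← Matrix.mul_assoc (star U) U, h1, Matrix.one_mul]
  rw [key, Matrix.trace_mul_cycle, h1, Matrix.one_mul,
    hDdef, Matrix.diagonal_pow, Matrix.trace_diagonal]
  push_cast
  rfl

/-- **Unitary equivalence of marginals for vanishing entropy production.**
If `U (ρ ⊗ ν) U* = ρ' ⊗ ν` for a faithful density matrix `ν` and a unitary `U`,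
then `tr(ρ^m) = tr(ρ'^m)` for all `m ≥ 1` and `ρ'` is unitarily equivalent
to `ρ`. -/
theorem marginals_unitarily_equivalent {dS dR : ℕ}
    (ρ ρ' : Matrix (Fin dS) (Fin dS) ℂ) (ν : Matrix (Fin dR) (Fin dR) ℂ)
    (hρ : IsDensityMatrix ρ) (hρ' : IsDensityMatrix ρ')
    (hν : ν.PosDef) (hνtr : ν.trace = 1)
    (U : Matrix (Fin dS × Fin dR) (Fin dS × Fin dR) ℂ)
    (hU : U ∈ Matrix.unitaryGroup (Fin dS × Fin dR) ℂ)
    (h : U * (ρ ⊗ₖ ν) * Uᴴ = ρ' ⊗ₖ ν) :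
    (∀ m : ℕ, 1 ≤ m → Matrix.trace (ρ ^ m) = Matrix.trace (ρ' ^ m)) ∧
    ∃ V ∈ Matrix.unitaryGroup (Fin dS) ℂ, ρ' = V * ρ * Vᴴ := by
  classical
  have hρH : ρ.IsHermitian := hρ.1.1
  have hρ'H : ρ'.IsHermitian := hρ'.1.1
  have hνH : ν.IsHermitian := hν.1
  have hne : Nonempty (Fin dR) := by
    rcases Nat.eq_zero_or_pos dR with h0 | h0
    · subst h0
      exact absurd hνtr (by simp [Matrix.trace])
    · exact ⟨⟨0, h0⟩⟩
  have hU1 : U * Uᴴ = 1 := by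
    have := Matrix.mem_unitaryGroup_iff.mp hU
    rwa [Matrix.star_eq_conjTranspose] at this
  have hU2 : Uᴴ * U = 1 := by
    have := Matrix.mem_unitaryGroup_iff'.mp hU
    rwa [Matrix.star_eq_conjTranspose] at this
  have hconj : ∀ m : ℕ, (ρ' ⊗ₖ ν) ^ m = U * (ρ ⊗ₖ ν) ^ m * Uᴴ := by
    intro m
    induction m with
    | zero => simpa using hU1.symm
    | succ k ih =>
      rw [pow_succ, ih, ← h, pow_succ]
      simp only [Matrix.mul_assoc]
      rw [← Matrix.mul_assoc Uᴴ U, hU2, Matrix.one_mul]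
  have kron_pow : ∀ (A : Matrix (Fin dS) (Fin dS) ℂ) (B : Matrix (Fin dR) (Fin dR) ℂ) (m : ℕ),
      (A ⊗ₖ B) ^ m = (A ^ m) ⊗ₖ (B ^ m) := by
    intro A B m
    induction m with
    | zero => simp [Matrix.one_kronecker_one]
    | succ k ih => rw [pow_succ, ih, pow_succ, pow_succ, Matrix.mul_kronecker_mul]
  have htr : ∀ m : ℕ, Matrix.trace ((ρ' ⊗ₖ ν) ^ m) = Matrix.trace ((ρ ⊗ₖ ν) ^ m) := by
    intro m
    rw [hconj m, Matrix.trace_mul_cycle, hU2, Matrix.one_mul]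
  have hνpos : ∀ m : ℕ, (0 : ℝ) < ∑ i, hνH.eigenvalues i ^ m := by
    intro m
    exact Finset.sum_pos (fun i _ => pow_pos (hν.eigenvalues_pos i) m)
      ⟨Classical.arbitrary _, Finset.mem_univ _⟩
  have hmain : ∀ m : ℕ, Matrix.trace (ρ ^ m) = Matrix.trace (ρ' ^ m) := by
    intro m
    have h1 := htr m
    rw [kron_pow, kron_pow, Matrix.trace_kronecker, Matrix.trace_kronecker] at h1
    have hc : Matrix.trace (ν ^ m) ≠ 0 := by
      rw [trace_pow_eq_sum_eig hνH]
      exact_mod_cast (hνpos m).ne'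
    exact (mul_right_cancel₀ hc h1).symm
  refine ⟨fun m _ => hmain m, ?_⟩
  have hps : ∀ m : ℕ, 1 ≤ m → ∑ i, hρH.eigenvalues i ^ m = ∑ i, hρ'H.eigenvalues i ^ m := by
    intro m hm
    have h2 := hmain m
    rw [trace_pow_eq_sum_eig hρH, trace_pow_eq_sum_eig hρ'H] at h2
    exact_mod_cast h2
  obtain ⟨σ, hσ⟩ := exists_perm_of_psum_eq _ _ hps
  set W : Matrix (Fin dS) (Fin dS) ℂ := (hρH.eigenvectorUnitary : Matrix (Fin dS) (Fin dS) ℂ)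
  set W' : Matrix (Fin dS) (Fin dS) ℂ := (hρ'H.eigenvectorUnitary : Matrix (Fin dS) (Fin dS) ℂ)
  set P : Matrix (Fin dS) (Fin dS) ℂ := σ.toPEquiv.toMatrix
  set Q : Matrix (Fin dS) (Fin dS) ℂ := (σ⁻¹).toPEquiv.toMatrix
  have hW1 : Wᴴ * W = 1 := by
    have := Matrix.mem_unitaryGroup_iff'.mp hρH.eigenvectorUnitary.2
    rwa [Matrix.star_eq_conjTranspose] at this
  have hW'1 : W' * W'ᴴ = 1 := by
    have := Matrix.mem_unitaryGroup_iff.mp hρ'H.eigenvectorUnitary.2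
    rwa [Matrix.star_eq_conjTranspose] at this
  have hPQ : P * Q = 1 := by
    rw [← PEquiv.toMatrix_trans, ← Equiv.toPEquiv_trans]
    rw [show σ.trans σ⁻¹ = Equiv.refl (Fin dS) from Equiv.self_trans_symm σ,
      Equiv.toPEquiv_refl, PEquiv.toMatrix_refl]
  have hQ : Pᴴ = Q := by
    ext i j
    by_cases hij : σ j = i
    · have h2 : σ.symm i = j := by rw [← hij]; simp
      simp [P, Q, PEquiv.toMatrix, Equiv.toPEquiv_apply, hij, h2,
        Matrix.conjTranspose_apply, Option.mem_def]
    · have h2 : ¬ σ.symm i = j := fun hc => hij (by rw [← hc]; simp)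
      simp [P, Q, PEquiv.toMatrix, Equiv.toPEquiv_apply, hij, h2,
        Matrix.conjTranspose_apply, Option.mem_def]
  set D : Matrix (Fin dS) (Fin dS) ℂ := Matrix.diagonal (RCLike.ofReal ∘ hρH.eigenvalues)
  have hD' : Matrix.diagonal (RCLike.ofReal ∘ hρ'H.eigenvalues) = P * D * Q := by
    rw [PEquiv.toMatrix_toPEquiv_mul, PEquiv.mul_toMatrix_toPEquiv]
    have : (σ⁻¹ : Equiv.Perm (Fin dS)).symm = σ := rfl
    rw [this, Matrix.submatrix_submatrix, Function.comp_id, Function.id_comp,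
      Matrix.submatrix_diagonal_equiv]
    rw [hσ]
    rfl
  refine ⟨W' * P * Wᴴ, ?_, ?_⟩
  · rw [Matrix.mem_unitaryGroup_iff, Matrix.star_eq_conjTranspose,
      Matrix.conjTranspose_mul, Matrix.conjTranspose_mul, Matrix.conjTranspose_conjTranspose, hQ]
    calc W' * P * Wᴴ * (W * (Q * W'ᴴ))
        = W' * (P * (Wᴴ * W * (Q * W'ᴴ))) := by simp only [Matrix.mul_assoc]
      _ = 1 := by rw [hW1, Matrix.one_mul, ← Matrix.mul_assoc P Q, hPQ, Matrix.one_mul, hW'1]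
  · rw [hρ'H.spectral_theorem, hρH.spectral_theorem, Unitary.conjStarAlgAut_apply,
      Unitary.conjStarAlgAut_apply, hD']
    rw [Matrix.conjTranspose_mul, Matrix.conjTranspose_mul, Matrix.conjTranspose_conjTranspose, hQ]
    simp only [Matrix.star_eq_conjTranspose, Matrix.mul_assoc]
    rw [← Matrix.mul_assoc Wᴴ W, hW1, Matrix.one_mul, ← Matrix.mul_assoc Wᴴ W, hW1, Matrix.one_mul]
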